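/- For every n ≥ 2, the cube polynomial of the Lucas cube Λ_n satisfies C_{Λ_n}(x) = Σ_{k=0}^{⌊n/2⌋} [2·binom(n−k, k) − binom(n−k−1, k)] (1 + x)^k. -/

import Mathlib

def Qcube (n : ℕ) : SimpleGraph (Fin n → Bool) where
  Adj u v := hammingDist u v = 1
  symm := ⟨fun u v h => by rwa [hammingDist_comm]⟩
  loopless := ⟨fun u h => by simp [hammingDist_self] at h⟩

def daisySet {n : ℕ} (X : Set (Fin n → Bool)) : Set (Fin n → Bool) :=
  {u | ∃ x ∈ X, u ≤ x}

noncomputable def cubeCount {V : Type*} (G : SimpleGraph V) (k : ℕ) : ℕ :=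
  Set.ncard {S : Set V | Nonempty (G.induce S ≃g Qcube k)}

noncomputable def distToSet {V : Type*} (G : SimpleGraph V) (u : V) (S : Set V) : ℕ :=
  sInf (G.dist u '' S)

noncomputable def distCubeCount {V : Type*} (G : SimpleGraph V) (u : V) (k d : ℕ) : ℕ :=
  Set.ncard {S : Set V | Nonempty (G.induce S ≃g Qcube k) ∧ distToSet G u S = d}

noncomputable def wCount {V : Type*} (G : SimpleGraph V) (u : V) (d : ℕ) : ℕ :=
  Set.ncard {v : V | G.dist u v = d}

def interval {V : Type*} (G : SimpleGraph V) (u v : V) : Set V :=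
  {w | G.dist u v = G.dist u w + G.dist w v}

def fibSet (n : ℕ) : Set (Fin n → Bool) :=
  {u | ∀ i j : Fin n, (j : ℕ) = (i : ℕ) + 1 → ¬(u i = true ∧ u j = true)}

lemma zero_mem_fibSet (n : ℕ) : (fun _ => false) ∈ fibSet n := by
  intro i j _ h
  simp at h

def lucasSet (n : ℕ) : Set (Fin n → Bool) :=
  {u | u ∈ fibSet n ∧ ∀ i j : Fin n, (i : ℕ) = 0 → (j : ℕ) = n - 1 → ¬(u i = true ∧ u j = true)}

lemma zero_mem_lucasSet (n : ℕ) : (fun _ => false) ∈ lucasSet n := by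
  refine ⟨zero_mem_fibSet n, ?_⟩
  intro i j _ _ h
  simp at h

open Finset

variable {n k : ℕ}

def myFlip (v : Fin n → Bool) (i : Fin n) : Fin n → Bool := Function.update v i (!v i)

lemma myFlip_same (v : Fin n → Bool) (i : Fin n) : myFlip v i i = !v i := by
  simp [myFlip]

lemma myFlip_ne (v : Fin n → Bool) {i i' : Fin n} (h : i' ≠ i) : myFlip v i i' = v i' := by
  simp [myFlip, Function.update, h]

lemma hamming_eq (u v : Fin n → Bool) :
    hammingDist u v = (Finset.univ.filter (fun i => u i ≠ v i)).card := rfl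

lemma hamming_one_iff {v w : Fin n → Bool} :
    hammingDist v w = 1 ↔ ∃ i, w = myFlip v i := by
  rw [hamming_eq, Finset.card_eq_one]
  constructor
  · rintro ⟨i, hi⟩
    refine ⟨i, funext fun j => ?_⟩
    by_cases hj : j = i
    · subst hj
      have : j ∈ Finset.univ.filter (fun i => v i ≠ w i) := by rw [hi]; exact Finset.mem_singleton_self _
      simp only [Finset.mem_filter] at this
      simp [myFlip, Function.update]
      cases hw : w j <;> cases hv : v j <;> simp_all
    · have : j ∉ Finset.univ.filter (fun i => v i ≠ w i) := by rw [hi]; simp [hj]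
      simp only [Finset.mem_filter, Finset.mem_univ, true_and, not_not] at this
      simp [myFlip, Function.update, hj, this.symm]
  · rintro ⟨i, rfl⟩
    refine ⟨i, ?_⟩
    ext j
    simp only [Finset.mem_filter, Finset.mem_univ, true_and, Finset.mem_singleton]
    constructor
    · intro h; by_contra hj; apply h; simp [myFlip, Function.update, hj]
    · rintro rfl; simp [myFlip, Function.update]

def mySupp (u : Fin n → Bool) : Finset (Fin n) := Finset.univ.filter (fun i => u i = true)

def myCube (u : Fin n → Bool) (K : Finset (Fin n)) : Set (Fin n → Bool) :=
  {v | ∀ i ∉ K, v i = u i}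

lemma qcube_adj {u v : Fin n → Bool} : (Qcube n).Adj u v ↔ hammingDist u v = 1 := Iff.rfl

lemma induce_adj {S : Set (Fin n → Bool)} {a b : S} :
    ((Qcube n).induce S).Adj a b ↔ hammingDist (a : Fin n → Bool) b = 1 := Iff.rfl

def indic (s : Finset (Fin k)) : Fin k → Bool := fun j => decide (j ∈ s)

lemma indic_inj : Function.Injective (indic (k := k)) := by
  intro s t h
  ext j
  have := congrFun h j
  simpa [indic] using this

def Fform (b : Fin n → Bool) (c : Fin k → Fin n) (s : Finset (Fin k)) : Fin n → Bool :=
  fun i => if i ∈ s.image c then !b i else b i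

lemma hamming_indic_erase {s : Finset (Fin k)} {j : Fin k} (hj : j ∈ s) :
    hammingDist (indic (s.erase j)) (indic s) = 1 := by
  rw [hamming_eq, Finset.card_eq_one]
  refine ⟨j, ?_⟩
  ext t
  simp only [Finset.mem_filter, Finset.mem_univ, true_and, Finset.mem_singleton, indic]
  by_cases ht : t = j
  · subst ht; simp [hj]
  · simp [Finset.mem_erase, ht]

lemma cube_classify {T : Set (Fin n → Bool)} (e : (Qcube n).induce T ≃g Qcube k) :
    ∃ (u : Fin n → Bool) (K : Finset (Fin n)), K.card = k ∧ K ⊆ mySupp u ∧ T = myCube u K := by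
  classical
  set g : (Fin k → Bool) → (Fin n → Bool) := fun ε => (e.symm ε : Fin n → Bool) with hg
  have ginj : Function.Injective g := by
    intro a b h
    exact e.symm.toEquiv.injective (Subtype.ext h)
  have gadj : ∀ ε δ : Fin k → Bool, hammingDist (g ε) (g δ) = 1 ↔ hammingDist ε δ = 1 := by
    intro ε δ
    exact e.symm.map_rel_iff (a := ε) (b := δ)
  set b : Fin n → Bool := g (indic ∅) with hb
  -- choose the coordinates
  have hflip : ∀ j : Fin k, ∃ i, g (indic {j}) = myFlip b i := by
    intro j
    have h1 : hammingDist (indic (∅ : Finset (Fin k))) (indic ({j} : Finset (Fin k))) = 1 := by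
      have := hamming_indic_erase (s := {j}) (j := j) (Finset.mem_singleton_self j)
      simpa using this
    have := (gadj (indic ∅) (indic {j})).mpr h1
    exact hamming_one_iff.mp this
  set c : Fin k → Fin n := fun j => Classical.choose (hflip j) with hc
  have hcspec : ∀ j, g (indic {j}) = myFlip b (c j) := fun j => Classical.choose_spec (hflip j)
  have cinj : Function.Injective c := by
    intro j j' h
    have : g (indic {j}) = g (indic {j'}) := by rw [hcspec j, hcspec j', h]
    have := indic_inj (ginj this)
    simpa using this
  -- the key pointwise description of Fform differences
  have Fdiff : ∀ (s t : Finset (Fin k)) (i : Fin n),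
      (Fform b c s i = Fform b c t i ↔ (i ∈ s.image c ↔ i ∈ t.image c)) := by
    intro s t i
    simp only [Fform]
    by_cases hs : i ∈ s.image c <;> by_cases ht : i ∈ t.image c <;>
      simp [hs, ht] <;> cases b i <;> simp
  -- main claim
  have main : ∀ m (s : Finset (Fin k)), s.card = m → g (indic s) = Fform b c s := by
    intro m
    induction m using Nat.strong_induction_on with
    | _ m ih =>
      intro s hs
      match m, hs with
      | 0, hs =>
        have : s = ∅ := Finset.card_eq_zero.mp hs
        subst this
        funext i
        simp [Fform, ← hb]
      | 1, hs =>
        obtain ⟨j, rfl⟩ := Finset.card_eq_one.mp hs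
        rw [hcspec j]
        funext i
        by_cases hi : i = c j
        · subst hi
          rw [myFlip_same]
          simp [Fform]
        · rw [myFlip_ne _ hi]
          have : i ∉ ({j} : Finset (Fin k)).image c := by
            simp only [Finset.image_singleton, Finset.mem_singleton]
            exact hi
          simp [Fform, this, hi]
      | (m+2), hs =>
        -- pick two distinct elements
        have h2 : 1 < s.card := by omega
        obtain ⟨j, hjs, j', hj's, hjj'⟩ := Finset.one_lt_card.mp h2
        set s1 := s.erase j with hs1
        set s2 := s.erase j' with hs2
        set s12 := (s.erase j).erase j' with hs12
        have hcard1 : s1.card = m + 1 := by rw [hs1, Finset.card_erase_of_mem hjs]; omega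
        have hcard2 : s2.card = m + 1 := by rw [hs2, Finset.card_erase_of_mem hj's]; omega
        have hj's1 : j' ∈ s1 := Finset.mem_erase.mpr ⟨hjj'.symm, hj's⟩
        have hcard12 : s12.card = m := by
          rw [hs12, Finset.card_erase_of_mem hj's1, Finset.card_erase_of_mem hjs]; omega
        have IH1 : g (indic s1) = Fform b c s1 := ih (m+1) (by omega) s1 hcard1
        have IH2 : g (indic s2) = Fform b c s2 := ih (m+1) (by omega) s2 hcard2
        have IH12 : g (indic s12) = Fform b c s12 := ih m (by omega) s12 hcard12
        -- adjacency gives flips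
        have ha1 : ∃ i, g (indic s) = myFlip (Fform b c s1) i := by
          rw [← IH1]
          exact hamming_one_iff.mp ((gadj _ _).mpr (hamming_indic_erase hjs))
        have ha2 : ∃ i, g (indic s) = myFlip (Fform b c s2) i := by
          rw [← IH2]
          exact hamming_one_iff.mp ((gadj _ _).mpr (hamming_indic_erase hj's))
        obtain ⟨i1, hi1⟩ := ha1
        obtain ⟨i2, hi2⟩ := ha2
        have hcc : c j ≠ c j' := fun h => hjj' (cinj h)
        have himg1 : s1.image c = (s.image c).erase (c j) := Finset.image_erase cinj s j
        have himg2 : s2.image c = (s.image c).erase (c j') := Finset.image_erase cinj s j'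
        have hjmem0 : c j ∈ s.image c := Finset.mem_image_of_mem c hjs
        have hj'mem0 : c j' ∈ s.image c := Finset.mem_image_of_mem c hj's
        have hjm1 : c j ∉ s1.image c := by rw [himg1]; exact Finset.notMem_erase _ _
        have hj'm1 : c j' ∈ s1.image c := by
          rw [himg1]; exact Finset.mem_erase.mpr ⟨hcc.symm, hj'mem0⟩
        have himg12 : s12.image c = ((s.image c).erase (c j)).erase (c j') := by
          rw [hs12, Finset.image_erase cinj, Finset.image_erase cinj]
        have hjmem : c j ∈ s.image c := Finset.mem_image_of_mem c hjs
        have hj'mem : c j' ∈ s.image c := Finset.mem_image_of_mem c hj's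
        have hAB : ∀ i, i ≠ c j → i ≠ c j' → Fform b c s1 i = Fform b c s2 i := by
          intro i h1 h2
          rw [Fdiff, himg1, himg2]
          simp [Finset.mem_erase, h1, h2]
        have hABj : Fform b c s1 (c j) ≠ Fform b c s2 (c j) := by
          rw [Ne, Fdiff, himg1, himg2]
          intro h
          have : c j ∈ (s.image c).erase (c j') := Finset.mem_erase.mpr ⟨hcc, hjmem⟩
          have := h.mpr this
          exact (Finset.notMem_erase (c j) _) this
        have hABj' : Fform b c s1 (c j') ≠ Fform b c s2 (c j') := by
          rw [Ne, Fdiff, himg1, himg2]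
          intro h
          have : c j' ∈ (s.image c).erase (c j) := Finset.mem_erase.mpr ⟨hcc.symm, hj'mem⟩
          have := h.mp this
          exact (Finset.notMem_erase (c j') _) this
        -- locate i1
        have hi1mem : i1 = c j ∨ i1 = c j' := by
          by_contra hcon
          push_neg at hcon
          obtain ⟨h1, h2⟩ := hcon
          have eA : g (indic s) (c j) = Fform b c s1 (c j) := by
            rw [hi1]; exact myFlip_ne _ (Ne.symm h1)
          have hi2j : i2 = c j := by
            by_contra h
            have eB : g (indic s) (c j) = Fform b c s2 (c j) := by
              rw [hi2]; exact myFlip_ne _ (Ne.symm h)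
            exact hABj (eA.symm.trans eB)
          have eA' : g (indic s) (c j') = Fform b c s1 (c j') := by
            rw [hi1]; exact myFlip_ne _ (Ne.symm h2)
          have eB' : g (indic s) (c j') = Fform b c s2 (c j') := by
            rw [hi2, hi2j]; exact myFlip_ne _ hcc.symm
          exact hABj' (eA'.symm.trans eB')
        -- rule out i1 = c j'
        have hi1j : i1 = c j := by
          rcases hi1mem with h | h
          · exact h
          · exfalso
            subst h
            have hXeq : g (indic s) = Fform b c s12 := by
              funext i
              by_cases hij' : i = c j'
              · subst hij'
                rw [hi1, myFlip_same]
                have hv1 : Fform b c s1 (c j') = !b (c j') := by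
                  simp [Fform, hj'm1]
                rw [hv1, Bool.not_not]
                have : c j' ∉ s12.image c := by
                  rw [himg12]
                  exact Finset.notMem_erase _ _
                simp [Fform, this]
              · rw [hi1, myFlip_ne _ hij']
                apply (Fdiff s1 s12 i).mpr
                rw [himg1, himg12]
                simp only [Finset.mem_erase]
                constructor
                · rintro ⟨ha, hb'⟩; exact ⟨hij', ha, hb'⟩
                · rintro ⟨_, ha, hb'⟩; exact ⟨ha, hb'⟩
            rw [← IH12] at hXeq
            have := indic_inj (ginj hXeq)
            have hj'12 : j' ∈ s12 := this ▸ hj's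
            exact (Finset.notMem_erase j' _) hj'12
        -- conclude
        subst hi1j
        have hsins : s.image c = insert (c j) (s1.image c) := by
          rw [himg1, Finset.insert_erase hjmem]
        funext i
        by_cases hij : i = c j
        · subst hij
          rw [hi1, myFlip_same]
          have hv1 : Fform b c s1 (c j) = b (c j) := by simp [Fform, hjm1]
          rw [hv1]
          simp [Fform, hjmem]
        · rw [hi1, myFlip_ne _ hij]
          apply (Fdiff s1 s i).mpr
          rw [himg1]
          simp only [Finset.mem_erase]
          constructor
          · rintro ⟨_, ha⟩; exact ha
          · intro ha; exact ⟨hij, ha⟩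
  -- use the main claim to describe T
  set K : Finset (Fin n) := Finset.univ.image c with hK
  have hKcard : K.card = k := by
    rw [hK, Finset.card_image_of_injective _ cinj, Finset.card_univ, Fintype.card_fin]
  have hTb : T = myCube b K := by
    ext v
    constructor
    · intro hv
      have hve : v = g (e ⟨v, hv⟩) := by
        show v = ((e.symm (e ⟨v, hv⟩)) : Fin n → Bool)
        rw [e.symm_apply_apply]
      set ε := e ⟨v, hv⟩ with hε
      have hεind : ε = indic (mySupp ε) := by
        funext j'
        simp [indic, mySupp]
      have : v = Fform b c (mySupp ε) := by
        rw [hve]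
        conv_lhs => rw [hεind]
        exact main (mySupp ε).card (mySupp ε) rfl
      rw [this]
      intro i hi
      have : i ∉ (mySupp ε).image c := by
        intro hmem
        apply hi
        obtain ⟨a, _, rfl⟩ := Finset.mem_image.mp hmem
        exact Finset.mem_image_of_mem c (Finset.mem_univ a)
      simp [Fform, this]
    · intro hv
      set s : Finset (Fin k) := Finset.univ.filter (fun j' => v (c j') ≠ b (c j')) with hsdef
      have hFv : Fform b c s = v := by
        funext i
        by_cases hiK : i ∈ K
        · obtain ⟨j', _, rfl⟩ := Finset.mem_image.mp hiK
          have hmem : c j' ∈ s.image c ↔ v (c j') ≠ b (c j') := by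
            constructor
            · intro hm
              obtain ⟨a, ha, hca⟩ := Finset.mem_image.mp hm
              have : a = j' := cinj hca
              subst this
              exact (Finset.mem_filter.mp ha).2
            · intro hne
              exact Finset.mem_image_of_mem c (Finset.mem_filter.mpr ⟨Finset.mem_univ _, hne⟩)
          by_cases hne : v (c j') = b (c j')
          · have : c j' ∉ s.image c := by rw [hmem]; simpa using hne
            simp [Fform, this, hne]
          · have : c j' ∈ s.image c := hmem.mpr hne
            simp only [Fform, if_pos this]
            revert hne
            cases b (c j') <;> cases v (c j') <;> simp
        · have : i ∉ s.image c := by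
            intro hmem
            apply hiK
            obtain ⟨a, _, rfl⟩ := Finset.mem_image.mp hmem
            exact Finset.mem_image_of_mem c (Finset.mem_univ a)
          simp only [Fform, if_neg this]
          exact (hv i hiK).symm
      have : v = g (indic s) := by
        rw [main s.card s rfl, hFv]
      rw [this]
      exact (e.symm (indic s)).2
  refine ⟨fun i => if i ∈ K then true else b i, K, hKcard, ?_, ?_⟩
  · intro i hi
    simp [mySupp, hi]
  · rw [hTb]
    ext v
    constructor
    · intro hv i hi
      show v i = if i ∈ K then true else b i
      rw [if_neg hi]
      exact hv i hi
    · intro hv i hi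
      have h2 : v i = if i ∈ K then true else b i := hv i hi
      rwa [if_neg hi] at h2

def cubeEquiv (u : Fin n → Bool) (K : Finset (Fin n)) (hK : K.card = k) :
    (Fin k → Bool) ≃ myCube u K where
  toFun ε := ⟨fun i => if h : i ∈ K then ε ((K.orderIsoOfFin hK).symm ⟨i, h⟩) else u i,
    fun i hi => by simp [hi]⟩
  invFun v j := (v : Fin n → Bool) (K.orderIsoOfFin hK j)
  left_inv ε := by
    funext j
    have h : ((K.orderIsoOfFin hK j : {x // x ∈ K}) : Fin n) ∈ K := (K.orderIsoOfFin hK j).2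
    simp only [dif_pos h]
    congr 1
    have : (⟨((K.orderIsoOfFin hK j : {x // x ∈ K}) : Fin n), h⟩ : {x // x ∈ K})
        = K.orderIsoOfFin hK j := Subtype.ext rfl
    rw [this]
    exact (K.orderIsoOfFin hK).symm_apply_apply j
  right_inv v := by
    apply Subtype.ext
    funext i
    by_cases h : i ∈ K
    · simp only [dif_pos h]
      have : K.orderIsoOfFin hK ((K.orderIsoOfFin hK).symm ⟨i, h⟩) = ⟨i, h⟩ :=
        (K.orderIsoOfFin hK).apply_symm_apply _
      rw [this]
    · simp only [dif_neg h]
      exact (v.2 i h).symm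

lemma cubeEquiv_hamming (u : Fin n → Bool) (K : Finset (Fin n)) (hK : K.card = k)
    (ε δ : Fin k → Bool) :
    hammingDist ((cubeEquiv u K hK ε : Fin n → Bool)) ((cubeEquiv u K hK δ : Fin n → Bool))
      = hammingDist ε δ := by
  rw [hamming_eq, hamming_eq]
  have himg : Finset.univ.filter
      (fun i => (cubeEquiv u K hK ε : Fin n → Bool) i ≠ (cubeEquiv u K hK δ : Fin n → Bool) i)
      = (Finset.univ.filter (fun j => ε j ≠ δ j)).image
          (fun j => ((K.orderIsoOfFin hK j : {x // x ∈ K}) : Fin n)) := by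
    ext i
    simp only [Finset.mem_filter, Finset.mem_univ, true_and, Finset.mem_image]
    constructor
    · intro hne
      by_cases h : i ∈ K
      · refine ⟨(K.orderIsoOfFin hK).symm ⟨i, h⟩, ?_, ?_⟩
        · simpa only [cubeEquiv, Equiv.coe_fn_mk, dif_pos h] using hne
        · rw [(K.orderIsoOfFin hK).apply_symm_apply]
      · exfalso; apply hne
        simp only [cubeEquiv, Equiv.coe_fn_mk, dif_neg h]
    · rintro ⟨j, hj, rfl⟩
      have h : ((K.orderIsoOfFin hK j : {x // x ∈ K}) : Fin n) ∈ K := (K.orderIsoOfFin hK j).2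
      simp only [cubeEquiv, Equiv.coe_fn_mk, dif_pos h]
      have he : (⟨((K.orderIsoOfFin hK j : {x // x ∈ K}) : Fin n), h⟩ : {x // x ∈ K})
          = K.orderIsoOfFin hK j := Subtype.ext rfl
      rw [he, (K.orderIsoOfFin hK).symm_apply_apply]
      exact hj
  rw [himg, Finset.card_image_of_injective]
  intro a b hab
  exact (K.orderIsoOfFin hK).injective (Subtype.ext hab)

lemma myCube_iso (u : Fin n → Bool) (K : Finset (Fin n)) (hK : K.card = k) :
    Nonempty ((Qcube n).induce (myCube u K) ≃g Qcube k) := by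
  refine ⟨{ toEquiv := (cubeEquiv u K hK).symm, map_rel_iff' := ?_ }⟩
  intro a b
  rw [qcube_adj, induce_adj]
  have ha : (cubeEquiv u K hK ((cubeEquiv u K hK).symm a)) = a := (cubeEquiv u K hK).apply_symm_apply a
  have := cubeEquiv_hamming u K hK ((cubeEquiv u K hK).symm a) ((cubeEquiv u K hK).symm b)
  rw [ha, (cubeEquiv u K hK).apply_symm_apply b] at this
  rw [this]

def wt (u : Fin n → Bool) : ℕ := (mySupp u).card

lemma mem_myCube_self (u : Fin n → Bool) (K : Finset (Fin n)) : u ∈ myCube u K :=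
  fun _ _ => rfl

lemma myCube_le {u : Fin n → Bool} {K : Finset (Fin n)} (hK : K ⊆ mySupp u)
    {v : Fin n → Bool} (hv : v ∈ myCube u K) {i : Fin n} (h : v i = true) : u i = true := by
  by_cases hiK : i ∈ K
  · have := hK hiK
    simpa [mySupp] using this
  · rw [← hv i hiK]; exact h

lemma lucas_downclosed {u v : Fin n → Bool} (h : ∀ i, v i = true → u i = true)
    (hu : u ∈ lucasSet n) : v ∈ lucasSet n := by
  refine ⟨fun i j hij hc => hu.1 i j hij ⟨h i hc.1, h j hc.2⟩,
    fun i j hi hj hc => hu.2 i j hi hj ⟨h i hc.1, h j hc.2⟩⟩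

lemma myCube_inj {u u' : Fin n → Bool} {K K' : Finset (Fin n)}
    (hK : K ⊆ mySupp u) (hK' : K' ⊆ mySupp u')
    (h : myCube u K = myCube u' K') : u = u' ∧ K = K' := by
  have key : ∀ (w w' : Fin n → Bool) (L L' : Finset (Fin n)), L ⊆ mySupp w →
      myCube w L = myCube w' L' → L ⊆ L' := by
    intro w w' L L' hL heq i hiL
    by_contra hiL'
    have hw : w ∈ myCube w' L' := heq ▸ mem_myCube_self w L
    set v : Fin n → Bool := fun t => if t = i then false else w t with hvdef
    have hv : v ∈ myCube w L := by
      intro t ht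
      have : t ≠ i := fun hh => ht (hh ▸ hiL)
      simp [hvdef, this]
    have hv' : v ∈ myCube w' L' := heq ▸ hv
    have e1 : v i = w' i := hv' i hiL'
    have e2 : w i = w' i := hw i hiL'
    have : v i = false := by simp [hvdef]
    have hwi : w i = true := by have := hL hiL; simpa [mySupp] using this
    rw [this] at e1; rw [hwi] at e2
    exact absurd (e1.trans e2.symm) (by simp)
  have hKK' : K = K' := le_antisymm (key u u' K K' hK h) (key u' u K' K hK' h.symm)
  subst hKK'
  refine ⟨funext fun i => ?_, rfl⟩
  by_cases hiK : i ∈ K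
  · have h1 : u i = true := by have := hK hiK; simpa [mySupp] using this
    have h2 : u' i = true := by have := hK' hiK; simpa [mySupp] using this
    rw [h1, h2]
  · have hu' : u ∈ myCube u' K := h ▸ mem_myCube_self u K
    exact hu' i hiK

noncomputable def lucasFinset (n : ℕ) : Finset (Fin n → Bool) :=
  @Finset.filter _ (· ∈ lucasSet n) (Classical.decPred _) Finset.univ

lemma mem_lucasFinset {u : Fin n → Bool} : u ∈ lucasFinset n ↔ u ∈ lucasSet n := by
  simp [lucasFinset]

noncomputable def isoVal (S : Set ↥(lucasSet n)) :
    (((Qcube n).induce (lucasSet n)).induce S) ≃g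
      ((Qcube n).induce (Subtype.val '' S)) where
  toEquiv := Equiv.Set.image _ S Subtype.coe_injective
  map_rel_iff' := Iff.rfl

lemma cubeCount_eq (n k : ℕ) :
    cubeCount ((Qcube n).induce (lucasSet n)) k = ∑ u ∈ lucasFinset n, (wt u).choose k := by
  classical
  set A := {S : Set ↥(lucasSet n) |
    Nonempty ((((Qcube n).induce (lucasSet n)).induce S) ≃g Qcube k)} with hA
  set B := {T : Set (Fin n → Bool) | T ⊆ lucasSet n ∧
    Nonempty ((Qcube n).induce T ≃g Qcube k)} with hB
  set C := {p : (Fin n → Bool) × Finset (Fin n) |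
    p.1 ∈ lucasSet n ∧ p.2 ⊆ mySupp p.1 ∧ p.2.card = k} with hC
  have hBA : B = (Set.image (Subtype.val : ↥(lucasSet n) → (Fin n → Bool))) '' A := by
    ext T
    constructor
    · rintro ⟨hsub, ⟨iso⟩⟩
      have hT : Subtype.val '' (Subtype.val ⁻¹' T : Set ↥(lucasSet n)) = T := by
        rw [Set.image_preimage_eq_inter_range, Subtype.range_coe]
        exact Set.inter_eq_self_of_subset_left hsub
      refine ⟨Subtype.val ⁻¹' T, ?_, hT⟩
      show Nonempty _
      refine ⟨(isoVal _).trans ?_⟩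
      rw [hT]
      exact iso
    · rintro ⟨S, hS, rfl⟩
      refine ⟨?_, ?_⟩
      · rintro _ ⟨a, _, rfl⟩
        exact a.2
      · obtain ⟨iso⟩ := hS
        exact ⟨(isoVal S).symm.trans iso⟩
  have hBC : B = (fun p : (Fin n → Bool) × Finset (Fin n) => myCube p.1 p.2) '' C := by
    ext T
    constructor
    · rintro ⟨hsub, ⟨iso⟩⟩
      obtain ⟨u, K, hcard, hK, hTeq⟩ := cube_classify iso
      have hu : u ∈ lucasSet n := hsub (hTeq ▸ mem_myCube_self u K)
      exact ⟨(u, K), ⟨hu, hK, hcard⟩, hTeq.symm⟩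
    · rintro ⟨⟨u, K⟩, ⟨hu, hK, hcard⟩, rfl⟩
      refine ⟨fun v hv => lucas_downclosed (fun i hi => myCube_le hK hv hi) hu, ?_⟩
      exact myCube_iso u K hcard
  have hinjA : Function.Injective (Set.image (Subtype.val : ↥(lucasSet n) → (Fin n → Bool))) :=
    Set.image_injective.mpr Subtype.coe_injective
  have hinjC : Set.InjOn (fun p : (Fin n → Bool) × Finset (Fin n) => myCube p.1 p.2) C := by
    rintro ⟨u, K⟩ ⟨hu, hK, _⟩ ⟨u', K'⟩ ⟨hu', hK', _⟩ h
    obtain ⟨h1, h2⟩ := myCube_inj hK hK' h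
    exact Prod.ext h1 h2
  have e1 : cubeCount ((Qcube n).induce (lucasSet n)) k = A.ncard := rfl
  have e2 : A.ncard = B.ncard := by
    rw [hBA, Set.ncard_image_of_injective _ hinjA]
  have e3 : B.ncard = C.ncard := by
    rw [hBC, Set.ncard_image_of_injOn hinjC]
  set Cfin : Finset ((Fin n → Bool) × Finset (Fin n)) :=
    Finset.univ.filter (fun p => p.1 ∈ lucasSet n ∧ p.2 ⊆ mySupp p.1 ∧ p.2.card = k) with hCfin
  have e4 : C = ↑Cfin := by
    ext p
    simp [hC, hCfin]
  have e5 : C.ncard = Cfin.card := by rw [e4, Set.ncard_coe_finset]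
  have e6 : Cfin.card = ∑ u ∈ lucasFinset n, (Cfin.filter (fun p => p.1 = u)).card := by
    exact Finset.card_eq_sum_card_fiberwise (fun p hp => by
      rw [Finset.mem_coe, mem_lucasFinset]; exact (Finset.mem_filter.mp (Finset.mem_coe.mp hp)).2.1)
  have e7 : ∀ u ∈ lucasFinset n,
      (Cfin.filter (fun p => p.1 = u)).card = ((mySupp u).powersetCard k).card := by
    intro u hu
    apply Finset.card_bij (i := fun p _ => p.2)
    · rintro ⟨u', K⟩ hp
      obtain ⟨hp1, hp2⟩ := Finset.mem_filter.mp hp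
      obtain ⟨_, hsub, hcard⟩ := (Finset.mem_filter.mp hp1).2
      cases hp2
      exact Finset.mem_powersetCard.mpr ⟨hsub, hcard⟩
    · rintro ⟨u1, K1⟩ h1 ⟨u2, K2⟩ h2 h
      have e1 : u1 = u := (Finset.mem_filter.mp h1).2
      have e2 : u2 = u := (Finset.mem_filter.mp h2).2
      exact Prod.ext (e1.trans e2.symm) h
    · intro K hK
      obtain ⟨hsub, hcard⟩ := Finset.mem_powersetCard.mp hK
      refine ⟨(u, K), ?_, rfl⟩
      refine Finset.mem_filter.mpr ⟨Finset.mem_filter.mpr ⟨Finset.mem_univ _, ?_, hsub, hcard⟩, rfl⟩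
      exact mem_lucasFinset.mp hu
  rw [e1, e2, e3, e5, e6]
  apply Finset.sum_congr rfl
  intro u hu
  rw [e7 u hu, Finset.card_powersetCard]; rfl

def fibF (m j : ℕ) : Finset (Finset ℕ) :=
  ((Finset.range m).powersetCard j).filter (fun s => ∀ i ∈ s, i + 1 ∉ s)

lemma mem_fibF {m j : ℕ} {s : Finset ℕ} :
    s ∈ fibF m j ↔ (s ⊆ Finset.range m ∧ s.card = j) ∧ ∀ i ∈ s, i + 1 ∉ s := by
  simp [fibF, Finset.mem_powersetCard]

lemma fibF_zero (m : ℕ) : (fibF m 0).card = 1 := by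
  have : fibF m 0 = {∅} := by
    ext s
    rw [mem_fibF]
    simp only [Finset.mem_singleton]
    constructor
    · rintro ⟨⟨_, hc⟩, _⟩; exact Finset.card_eq_zero.mp hc
    · rintro rfl; simp
  rw [this, Finset.card_singleton]

lemma fibF_big {m j : ℕ} (h : m < j) : (fibF m j).card = 0 := by
  rw [Finset.card_eq_zero]
  ext s
  rw [mem_fibF]
  simp only [Finset.notMem_empty, iff_false]
  rintro ⟨⟨hsub, hcard⟩, _⟩
  have := Finset.card_le_card hsub
  rw [hcard, Finset.card_range] at this
  omega

lemma fibF_rec (m j : ℕ) :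
    (fibF (m + 2) (j + 1)).card = (fibF (m + 1) (j + 1)).card + (fibF m j).card := by
  classical
  have hsplit := Finset.card_filter_add_card_filter_not
    (s := fibF (m + 2) (j + 1)) (p := fun s => (m + 1) ∈ s)
  have hA : (fibF (m + 2) (j + 1)).filter (fun s => ¬(m + 1) ∈ s) = fibF (m + 1) (j + 1) := by
    ext s
    simp only [Finset.mem_filter, mem_fibF]
    constructor
    · rintro ⟨⟨⟨hsub, hcard⟩, hnc⟩, hnm⟩
      refine ⟨⟨?_, hcard⟩, hnc⟩
      intro i hi
      have hr := hsub hi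
      rw [Finset.mem_range] at hr ⊢
      have : i ≠ m + 1 := fun hh => hnm (hh ▸ hi)
      omega
    · rintro ⟨⟨hsub, hcard⟩, hnc⟩
      have hnm : (m + 1) ∉ s := fun h => by
        have := hsub h; rw [Finset.mem_range] at this; omega
      exact ⟨⟨⟨fun i hi => by
        have := hsub hi; rw [Finset.mem_range] at this ⊢; omega, hcard⟩, hnc⟩, hnm⟩
  have hB : ((fibF (m + 2) (j + 1)).filter (fun s => (m + 1) ∈ s)).card = (fibF m j).card := by
    apply Finset.card_bij (i := fun s _ => s.erase (m + 1))
    · intro s hs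
      obtain ⟨hfib, hm⟩ := Finset.mem_filter.mp hs
      rw [mem_fibF] at hfib
      obtain ⟨⟨hsub, hcard⟩, hnc⟩ := hfib
      rw [mem_fibF]
      refine ⟨⟨?_, ?_⟩, ?_⟩
      · intro i hi
        obtain ⟨hne, his⟩ := Finset.mem_erase.mp hi
        have hr := hsub his
        rw [Finset.mem_range] at hr ⊢
        have him : i ≠ m := by
          rintro rfl
          exact hnc i his hm
        omega
      · rw [Finset.card_erase_of_mem hm, hcard]; omega
      · intro i hi hcon
        exact hnc i (Finset.mem_of_mem_erase hi) (Finset.mem_of_mem_erase hcon)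
    · intro s hs t ht h
      have hms := (Finset.mem_filter.mp hs).2
      have hmt := (Finset.mem_filter.mp ht).2
      rw [← Finset.insert_erase hms, ← Finset.insert_erase hmt, h]
    · intro t ht
      rw [mem_fibF] at ht
      obtain ⟨⟨hsub, hcard⟩, hnc⟩ := ht
      have hmt : (m + 1) ∉ t := fun h => by
        have := hsub h; rw [Finset.mem_range] at this; omega
      refine ⟨insert (m + 1) t, ?_, ?_⟩
      · apply Finset.mem_filter.mpr
        refine ⟨mem_fibF.mpr ⟨⟨?_, ?_⟩, ?_⟩, Finset.mem_insert_self _ _⟩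
        · intro i hi
          rcases Finset.mem_insert.mp hi with rfl | hi
          · exact Finset.mem_range.mpr (by omega)
          · have := hsub hi; rw [Finset.mem_range] at this ⊢; omega
        · rw [Finset.card_insert_of_notMem hmt, hcard]
        · intro i hi hcon
          rcases Finset.mem_insert.mp hi with rfl | hi
          · rcases Finset.mem_insert.mp hcon with h | h
            · omega
            · have := hsub h; rw [Finset.mem_range] at this; omega
          · rcases Finset.mem_insert.mp hcon with h | h
            · have := hsub hi; rw [Finset.mem_range] at this; omega
            · exact hnc i hi h
      · rw [Finset.erase_insert hmt]
  rw [← hA, ← hB]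
  omega

lemma fibF_card : ∀ m j, (fibF m j).card = (m + 1 - j).choose j := by
  intro m
  induction m using Nat.strong_induction_on with
  | _ m ih =>
    intro j
    match m, j with
    | m, 0 => rw [fibF_zero]; simp
    | 0, (j+1) => rw [fibF_big (by omega)]; rw [Nat.choose_eq_zero_of_lt] <;> omega
    | 1, (j+1) =>
      match j with
      | 0 =>
        have : fibF 1 1 = {{0}} := by
          ext s
          rw [mem_fibF]
          simp only [Finset.mem_singleton]
          constructor
          · rintro ⟨⟨hsub, hcard⟩, _⟩
            obtain ⟨a, rfl⟩ := Finset.card_eq_one.mp hcard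
            have := hsub (Finset.mem_singleton_self a)
            rw [Finset.mem_range] at this
            have : a = 0 := by omega
            rw [this]
          · rintro rfl
            refine ⟨⟨?_, rfl⟩, ?_⟩
            · intro i hi; rw [Finset.mem_singleton] at hi; subst hi; simp
            · intro i hi; rw [Finset.mem_singleton] at hi; subst hi; simp
        rw [this, Finset.card_singleton]; simp
      | (j+1) => rw [fibF_big (by omega), Nat.choose_eq_zero_of_lt] <;> omega
    | (m+2), (j+1) =>
      rw [fibF_rec, ih (m+1) (by omega) (j+1), ih m (by omega) j]
      have h1 : m + 2 + 1 - (j + 1) = m + 2 - j := by omega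
      rcases Nat.lt_or_ge (m + 2) (j + 1) with h | h
      · rw [Nat.choose_eq_zero_of_lt (by omega), Nat.choose_eq_zero_of_lt (by omega),
          Nat.choose_eq_zero_of_lt (by omega)]
      · have h2 : m + 2 - j = (m + 1 - j) + 1 := by omega
        rw [h1, h2, Nat.choose_succ_succ]
        have h3 : m + 1 + 1 - (j + 1) = m + 1 - j := by omega
        rw [h3]
        exact Nat.add_comm _ _

def fibI (a b j : ℕ) : Finset (Finset ℕ) :=
  ((Finset.Ico a b).powersetCard j).filter (fun s => ∀ i ∈ s, i + 1 ∉ s)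

lemma mem_fibI {a b j : ℕ} {s : Finset ℕ} :
    s ∈ fibI a b j ↔ (s ⊆ Finset.Ico a b ∧ s.card = j) ∧ ∀ i ∈ s, i + 1 ∉ s := by
  simp [fibI, Finset.mem_powersetCard]

lemma fibI_card (a m j : ℕ) : (fibI a (a + m) j).card = (m + 1 - j).choose j := by
  classical
  rw [← fibF_card m j]
  apply Finset.card_bij (i := fun s _ => s.image (fun x => x - a))
  · intro s hs
    obtain ⟨⟨hsub, hcard⟩, hnc⟩ := mem_fibI.mp hs
    have hge : ∀ x ∈ s, a ≤ x ∧ x < a + m := by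
      intro x hx
      have := hsub hx
      rw [Finset.mem_Ico] at this
      exact this
    rw [mem_fibF]
    refine ⟨⟨?_, ?_⟩, ?_⟩
    · intro i hi
      obtain ⟨x, hx, rfl⟩ := Finset.mem_image.mp hi
      obtain ⟨h1, h2⟩ := hge x hx
      rw [Finset.mem_range]; omega
    · rw [Finset.card_image_of_injOn, hcard]
      intro x hx y hy hxy
      obtain ⟨h1, _⟩ := hge x hx
      obtain ⟨h2, _⟩ := hge y hy
      simp only at hxy
      omega
    · intro i hi hcon
      obtain ⟨x, hx, rfl⟩ := Finset.mem_image.mp hi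
      obtain ⟨y, hy, hxy⟩ := Finset.mem_image.mp hcon
      obtain ⟨h1, _⟩ := hge x hx
      obtain ⟨h2, _⟩ := hge y hy
      have : y = x + 1 := by omega
      exact hnc x hx (this ▸ hy)
  · intro s hs t ht h
    obtain ⟨⟨hsubs, _⟩, _⟩ := mem_fibI.mp hs
    obtain ⟨⟨hsubt, _⟩, _⟩ := mem_fibI.mp ht
    ext x
    constructor
    · intro hx
      have hax : a ≤ x := (Finset.mem_Ico.mp (hsubs hx)).1
      have : x - a ∈ t.image (fun x => x - a) := by
        rw [← h]; exact Finset.mem_image_of_mem _ hx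
      obtain ⟨y, hy, hxy⟩ := Finset.mem_image.mp this
      have hay : a ≤ y := (Finset.mem_Ico.mp (hsubt hy)).1
      have : y = x := by omega
      exact this ▸ hy
    · intro hx
      have hax : a ≤ x := (Finset.mem_Ico.mp (hsubt hx)).1
      have : x - a ∈ s.image (fun x => x - a) := by
        rw [h]; exact Finset.mem_image_of_mem _ hx
      obtain ⟨y, hy, hxy⟩ := Finset.mem_image.mp this
      have hay : a ≤ y := (Finset.mem_Ico.mp (hsubs hy)).1
      have : y = x := by omega
      exact this ▸ hy
  · intro t ht
    obtain ⟨⟨hsub, hcard⟩, hnc⟩ := mem_fibF.mp ht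
    refine ⟨t.image (fun x => x + a), ?_, ?_⟩
    · rw [mem_fibI]
      refine ⟨⟨?_, ?_⟩, ?_⟩
      · intro i hi
        obtain ⟨x, hx, rfl⟩ := Finset.mem_image.mp hi
        have := hsub hx
        rw [Finset.mem_range] at this
        rw [Finset.mem_Ico]; omega
      · rw [Finset.card_image_of_injective _ (fun x y h => by omega), hcard]
      · intro i hi hcon
        obtain ⟨x, hx, rfl⟩ := Finset.mem_image.mp hi
        obtain ⟨y, hy, hxy⟩ := Finset.mem_image.mp hcon
        have : y = x + 1 := by omega
        exact hnc x hx (this ▸ hy)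
    · ext x
      constructor
      · intro hx
        obtain ⟨y, hy, rfl⟩ := Finset.mem_image.mp hx
        obtain ⟨z, hz, rfl⟩ := Finset.mem_image.mp hy
        have h2 : z + a - a = z := by omega
        rw [h2]
        exact hz
      · intro hx
        exact Finset.mem_image.mpr ⟨x + a, Finset.mem_image_of_mem _ hx, by omega⟩

def lucasSupp (n j : ℕ) : Finset (Finset ℕ) :=
  ((Finset.range n).powersetCard j).filter
    (fun s => (∀ i ∈ s, i + 1 ∉ s) ∧ ¬(0 ∈ s ∧ n - 1 ∈ s))

lemma mem_lucasSupp {n j : ℕ} {s : Finset ℕ} :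
    s ∈ lucasSupp n j ↔ (s ⊆ Finset.range n ∧ s.card = j) ∧
      (∀ i ∈ s, i + 1 ∉ s) ∧ ¬(0 ∈ s ∧ n - 1 ∈ s) := by
  simp [lucasSupp, Finset.mem_powersetCard]

lemma lucasSupp_zero (n : ℕ) : (lucasSupp n 0).card = 1 := by
  have : lucasSupp n 0 = {∅} := by
    ext s
    rw [mem_lucasSupp]
    simp only [Finset.mem_singleton]
    constructor
    · rintro ⟨⟨_, hc⟩, _⟩; exact Finset.card_eq_zero.mp hc
    · rintro rfl; simp
  rw [this, Finset.card_singleton]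

lemma lucasSupp_card (n j : ℕ) (hn : 2 ≤ n) :
    (lucasSupp n (j + 1)).card = (n - (j + 1)).choose (j + 1) + (n - (j + 1) - 1).choose j := by
  classical
  have hsplit := Finset.card_filter_add_card_filter_not
    (s := lucasSupp n (j + 1)) (p := fun s => (n - 1) ∈ s)
  have hA : (lucasSupp n (j + 1)).filter (fun s => ¬(n - 1) ∈ s) = fibF (n - 1) (j + 1) := by
    ext s
    rw [Finset.mem_filter, mem_lucasSupp, mem_fibF]
    constructor
    · rintro ⟨⟨⟨hsub, hcard⟩, hnc, _⟩, hnm⟩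
      refine ⟨⟨?_, hcard⟩, hnc⟩
      intro i hi
      have := hsub hi
      rw [Finset.mem_range] at this ⊢
      have : i ≠ n - 1 := fun hh => hnm (hh ▸ hi)
      omega
    · rintro ⟨⟨hsub, hcard⟩, hnc⟩
      have hnm : (n - 1) ∉ s := fun h => by
        have := hsub h; rw [Finset.mem_range] at this; omega
      refine ⟨⟨⟨fun i hi => by
        have := hsub hi; rw [Finset.mem_range] at this ⊢; omega, hcard⟩, hnc, ?_⟩, hnm⟩
      rintro ⟨_, h⟩
      exact hnm h
  have hB : ((lucasSupp n (j + 1)).filter (fun s => (n - 1) ∈ s)).card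
      = (fibI 1 (n - 2) j).card := by
    apply Finset.card_bij (i := fun s _ => s.erase (n - 1))
    · intro s hs
      obtain ⟨hl, hm⟩ := Finset.mem_filter.mp hs
      obtain ⟨⟨hsub, hcard⟩, hnc, hluc⟩ := mem_lucasSupp.mp hl
      rw [mem_fibI]
      refine ⟨⟨?_, ?_⟩, ?_⟩
      · intro i hi
        obtain ⟨hne, his⟩ := Finset.mem_erase.mp hi
        have hr := hsub his
        rw [Finset.mem_range] at hr
        have h0 : i ≠ 0 := by
          rintro rfl
          exact hluc ⟨his, hm⟩
        have h2 : i ≠ n - 2 := by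
          rintro rfl
          have : (n - 2) + 1 = n - 1 := by omega
          exact hnc _ his (this ▸ hm)
        rw [Finset.mem_Ico]
        omega
      · rw [Finset.card_erase_of_mem hm, hcard]; omega
      · intro i hi hcon
        exact hnc i (Finset.mem_of_mem_erase hi) (Finset.mem_of_mem_erase hcon)
    · intro s hs t ht h
      have hms := (Finset.mem_filter.mp hs).2
      have hmt := (Finset.mem_filter.mp ht).2
      rw [← Finset.insert_erase hms, ← Finset.insert_erase hmt, h]
    · intro t ht
      obtain ⟨⟨hsub, hcard⟩, hnc⟩ := mem_fibI.mp ht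
      have hrange : ∀ x ∈ t, 1 ≤ x ∧ x < n - 2 := by
        intro x hx
        have := hsub hx
        rwa [Finset.mem_Ico] at this
      have hmt : (n - 1) ∉ t := fun h => by
        have := hrange _ h; omega
      refine ⟨insert (n - 1) t, ?_, ?_⟩
      · apply Finset.mem_filter.mpr
        refine ⟨mem_lucasSupp.mpr ⟨⟨?_, ?_⟩, ?_, ?_⟩, Finset.mem_insert_self _ _⟩
        · intro i hi
          rcases Finset.mem_insert.mp hi with rfl | hi
          · exact Finset.mem_range.mpr (by omega)
          · have := hrange i hi; rw [Finset.mem_range]; omega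
        · rw [Finset.card_insert_of_notMem hmt, hcard]
        · intro i hi hcon
          rcases Finset.mem_insert.mp hi with rfl | hi
          · rcases Finset.mem_insert.mp hcon with h | h
            · omega
            · have := hrange _ h; omega
          · rcases Finset.mem_insert.mp hcon with h | h
            · have := hrange i hi; omega
            · exact hnc i hi h
        · rintro ⟨h0, _⟩
          rcases Finset.mem_insert.mp h0 with h | h
          · omega
          · have := hrange _ h; omega
      · rw [Finset.erase_insert hmt]
  have hIco : Finset.Ico 1 (n - 2) = Finset.Ico 1 (1 + (n - 3)) := by
    ext x
    rw [Finset.mem_Ico, Finset.mem_Ico]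
    omega
  have hI : (fibI 1 (n - 2) j).card = (n - (j + 1) - 1).choose j := by
    have : fibI 1 (n - 2) j = fibI 1 (1 + (n - 3)) j := by
      unfold fibI
      rw [hIco]
    rw [this, fibI_card]
    by_cases h : n = 2 ∧ j = 0
    · obtain ⟨rfl, rfl⟩ := h
      decide
    · push_neg at h
      have he : n - 3 + 1 - j = n - (j + 1) - 1 := by
        rcases Nat.eq_or_lt_of_le hn with h2 | h2
        · have hj : j ≠ 0 := h (h2.symm)
          omega
        · omega
      rw [he]
  have hF : (fibF (n - 1) (j + 1)).card = (n - (j + 1)).choose (j + 1) := by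
    rw [fibF_card]
    congr 1
    omega
  rw [hB] at hsplit
  rw [hA] at hsplit
  rw [hI, hF] at hsplit
  rw [← hsplit]
  exact Nat.add_comm _ _

lemma mem_image_val {u : Fin n → Bool} (i : Fin n) :
    (i : ℕ) ∈ (mySupp u).image Fin.val ↔ u i = true := by
  constructor
  · intro h
    obtain ⟨a, ha, hav⟩ := Finset.mem_image.mp h
    have : a = i := Fin.val_injective hav
    subst this
    exact (Finset.mem_filter.mp ha).2
  · intro h
    exact Finset.mem_image.mpr ⟨i, Finset.mem_filter.mpr ⟨Finset.mem_univ _, h⟩, rfl⟩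

lemma image_val_lt {u : Fin n → Bool} {x : ℕ} (h : x ∈ (mySupp u).image Fin.val) : x < n := by
  obtain ⟨a, _, rfl⟩ := Finset.mem_image.mp h
  exact a.isLt

lemma lucas_weight (n j : ℕ) :
    ((lucasFinset n).filter (fun u => wt u = j)).card = (lucasSupp n j).card := by
  classical
  apply Finset.card_bij (i := fun u _ => (mySupp u).image Fin.val)
  · intro u hu
    obtain ⟨hul, hwt⟩ := Finset.mem_filter.mp hu
    have hu' := mem_lucasFinset.mp hul
    rw [mem_lucasSupp]
    refine ⟨⟨?_, ?_⟩, ?_, ?_⟩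
    · intro x hx
      exact Finset.mem_range.mpr (image_val_lt hx)
    · rw [Finset.card_image_of_injective _ Fin.val_injective]
      exact hwt
    · intro x hx hx1
      have hxn : x < n := image_val_lt hx
      have hx1n : x + 1 < n := image_val_lt hx1
      have h1 : u ⟨x, hxn⟩ = true := (mem_image_val (u := u) ⟨x, hxn⟩).mp hx
      have h2 : u ⟨x + 1, hx1n⟩ = true := (mem_image_val (u := u) ⟨x + 1, hx1n⟩).mp hx1
      exact hu'.1 ⟨x, hxn⟩ ⟨x + 1, hx1n⟩ rfl ⟨h1, h2⟩
    · rintro ⟨h0, hn1⟩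
      have h0n : 0 < n := image_val_lt h0
      have hn1n : n - 1 < n := image_val_lt hn1
      have h1 : u ⟨0, h0n⟩ = true := (mem_image_val (u := u) ⟨0, h0n⟩).mp h0
      have h2 : u ⟨n - 1, hn1n⟩ = true := (mem_image_val (u := u) ⟨n - 1, hn1n⟩).mp hn1
      exact hu'.2 ⟨0, h0n⟩ ⟨n - 1, hn1n⟩ rfl rfl ⟨h1, h2⟩
  · intro u hu u' hu' h
    funext i
    have h1 := mem_image_val (u := u) i
    have h2 := mem_image_val (u := u') i
    rw [h] at h1
    cases hui : u i <;> cases hui' : u' i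
    · rfl
    · have := h1.mp (h2.mpr hui')
      rw [hui] at this
      exact absurd this (by simp)
    · have := h2.mp (h1.mpr hui)
      rw [hui'] at this
      exact absurd this (by simp)
    · rfl
  · intro s hs
    obtain ⟨⟨hsub, hcard⟩, hnc, hluc⟩ := mem_lucasSupp.mp hs
    set u : Fin n → Bool := fun i => decide ((i : ℕ) ∈ s) with hudef
    have himg : (mySupp u).image Fin.val = s := by
      ext x
      constructor
      · intro hx
        have hxn := image_val_lt hx
        have := (mem_image_val (u := u) ⟨x, hxn⟩).mp hx
        simpa [hudef] using this
      · intro hx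
        have hxn : x < n := Finset.mem_range.mp (hsub hx)
        exact (mem_image_val (u := u) ⟨x, hxn⟩).mpr (by simpa [hudef] using hx)
    refine ⟨u, ?_, himg⟩
    apply Finset.mem_filter.mpr
    constructor
    · apply mem_lucasFinset.mpr
      constructor
      · intro i i' hii' hc
        have hi : (i : ℕ) ∈ s := by simpa [hudef] using hc.1
        have hi' : (i' : ℕ) ∈ s := by simpa [hudef] using hc.2
        exact hnc i hi (hii' ▸ hi')
      · intro i i' hi0 hin hc
        have hi : (i : ℕ) ∈ s := by simpa [hudef] using hc.1
        have hi' : (i' : ℕ) ∈ s := by simpa [hudef] using hc.2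
        exact hluc ⟨hi0 ▸ hi, hin ▸ hi'⟩
    · show wt u = j
      rw [wt, ← hcard, ← himg, Finset.card_image_of_injective _ Fin.val_injective]

lemma binom_sum (w N : ℕ) (hw : w ≤ N) (x : ℝ) :
    ∑ k ∈ Finset.range (N + 1), (w.choose k : ℝ) * x ^ k = (1 + x) ^ w := by
  have h2 : (1 + x) ^ w = ∑ k ∈ Finset.range (w + 1), (w.choose k : ℝ) * x ^ k := by
    rw [add_comm (1 : ℝ) x, add_pow]
    apply Finset.sum_congr rfl
    intro k _
    rw [one_pow]
    ring
  rw [h2]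
  apply (Finset.sum_subset (Finset.range_subset_range.mpr (by omega)) ?_).symm
  intro k _ hk
  have : w < k := by
    rw [Finset.mem_range] at hk
    omega
  rw [Nat.choose_eq_zero_of_lt this]
  simp

theorem cubePolynomial_of_Lucas_cube (n : ℕ) (hn : 2 ≤ n) (x : ℝ) :
    ∑ k ∈ Finset.range (2 ^ n + 1),
      (cubeCount ((Qcube n).induce (lucasSet n)) k : ℝ) * x ^ k =
    ∑ k ∈ Finset.range (n / 2 + 1),
      (2 * ((n - k).choose k : ℝ) - ((n - k - 1).choose k : ℝ)) * (1 + x) ^ k := by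
  have hwt_le : ∀ u : Fin n → Bool, wt u ≤ n := by
    intro u
    simpa [wt, Fintype.card_fin] using Finset.card_le_univ (mySupp u)
  have step1 : ∑ k ∈ Finset.range (2 ^ n + 1),
      (cubeCount ((Qcube n).induce (lucasSet n)) k : ℝ) * x ^ k
      = ∑ u ∈ lucasFinset n, (1 + x) ^ wt u := by
    have : ∀ k, (cubeCount ((Qcube n).induce (lucasSet n)) k : ℝ) * x ^ k
        = ∑ u ∈ lucasFinset n, ((wt u).choose k : ℝ) * x ^ k := by
      intro k
      rw [cubeCount_eq n k]
      push_cast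
      rw [Finset.sum_mul]
    rw [Finset.sum_congr rfl (fun k _ => this k), Finset.sum_comm]
    apply Finset.sum_congr rfl
    intro u _
    exact binom_sum (wt u) (2 ^ n) (le_trans (hwt_le u) (Nat.le_of_lt (Nat.lt_two_pow_self))) x
  have step2 : ∑ u ∈ lucasFinset n, (1 + x) ^ wt u
      = ∑ j ∈ Finset.range (n + 1),
          (((lucasFinset n).filter (fun u => wt u = j)).card : ℝ) * (1 + x) ^ j := by
    rw [← Finset.sum_fiberwise_of_maps_to (g := wt) (t := Finset.range (n + 1))
      (fun u _ => Finset.mem_range.mpr (by have := hwt_le u; omega))]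
    apply Finset.sum_congr rfl
    intro j _
    rw [Finset.sum_congr rfl (fun u hu => by
      rw [(Finset.mem_filter.mp hu).2] : ∀ u ∈ (lucasFinset n).filter (fun u => wt u = j),
        (1 + x) ^ wt u = (1 + x) ^ j)]
    rw [Finset.sum_const, nsmul_eq_mul]
  have hzero : ∀ j ∈ Finset.range (n + 1), j ∉ Finset.range (n / 2 + 1) →
      (((lucasFinset n).filter (fun u => wt u = j)).card : ℝ) * (1 + x) ^ j = 0 := by
    intro j hj hj2
    rw [Finset.mem_range] at hj hj2
    have hj1 : n / 2 + 1 ≤ j := by omega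
    obtain ⟨j', rfl⟩ : ∃ j', j = j' + 1 := ⟨j - 1, by omega⟩
    rw [lucas_weight, lucasSupp_card n j' hn,
      Nat.choose_eq_zero_of_lt (by omega), Nat.choose_eq_zero_of_lt (by omega)]
    simp
  have step3 : ∑ j ∈ Finset.range (n + 1),
      (((lucasFinset n).filter (fun u => wt u = j)).card : ℝ) * (1 + x) ^ j
      = ∑ j ∈ Finset.range (n / 2 + 1),
          (((lucasFinset n).filter (fun u => wt u = j)).card : ℝ) * (1 + x) ^ j :=
    (Finset.sum_subset (Finset.range_subset_range.mpr (by omega)) hzero).symm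
  rw [step1, step2, step3]
  apply Finset.sum_congr rfl
  intro j hj
  rw [Finset.mem_range] at hj
  congr 1
  match j with
  | 0 =>
    rw [lucas_weight, lucasSupp_zero]
    norm_num
  | (j' + 1) =>
    rw [lucas_weight, lucasSupp_card n j' hn]
    have hple : j' + 1 ≤ n - (j' + 1) := by omega
    have hpascal : (n - (j' + 1)).choose (j' + 1)
        = (n - (j' + 1) - 1).choose j' + (n - (j' + 1) - 1).choose (j' + 1) := by
      have h1 : n - (j' + 1) = (n - (j' + 1) - 1) + 1 := by omega
      rw [h1]
      exact Nat.choose_succ_succ _ _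
    push_cast
    rw [hpascal]
    push_cast
    ring
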